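/- Let f : S → S be an area-preserving homeomorphism of a surface S with invariant domain U having finitely many ideal boundary points, let e be a fixed prime end of U, p a principal point of e, and (Vᵢ) a chain defining e with fr_U(Vᵢ) → p. Let i₀ = inf{ i ≥ 1 : f(Vᵢ) ⊆ V₁ }. Then for all i ≥ i₀, fr_U(Vᵢ) ∩ fr_U(f(Vᵢ)) ≠ ∅. -/

import Mathlib

open Filter Topology MeasureTheory

variable {S : Type*} [TopologicalSpace S]

/-- Frontier of `V` relative to the open set `U` (for `V ⊆ U` open). -/
def frIn (U V : Set S) : Set S := (closure V ∩ U) \ V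

/-- A chain in the domain `U`. -/
def IsPEChain (U : Set S) (V : ℕ → Set S) : Prop :=
  (∀ i, IsOpen (V i)) ∧ (∀ i, IsConnected (V i)) ∧ (∀ i, V i ⊆ U) ∧
  (∀ i, V (i + 1) ⊆ V i) ∧
  (∀ i, (frIn U (V i)).Nonempty ∧ IsPreconnected (frIn U (V i))) ∧
  (∀ i j, i ≠ j → closure (frIn U (V i)) ∩ closure (frIn U (V j)) = ∅)

/-- The chain `W` divides the chain `V`. -/
def ChainDivides (W V : ℕ → Set S) : Prop := ∀ i, ∃ j, W j ⊆ V i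

/-- Two chains are equivalent if each divides the other. -/
def ChainEquiv (W V : ℕ → Set S) : Prop := ChainDivides W V ∧ ChainDivides V W

/-- The frontiers of the chain `V` converge to the point `p`. -/
def FrTendsTo (U : Set S) (V : ℕ → Set S) (p : S) : Prop :=
  ∀ N ∈ 𝓝 p, ∀ᶠ i in atTop, frIn U (V i) ⊆ N

/-- The relative frontier of an image under an invariant homeomorphism. -/
lemma frIn_image (f : S ≃ₜ S) (U A : Set S) (hU : f '' U = U) :
    frIn U (f '' A) = f '' frIn U A := by
  unfold frIn
  rw [Set.image_diff f.injective, Set.image_inter f.injective, f.image_closure, hU]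

/-- A preconnected subset of `U` missing the relative frontier of `A` lies in `A`
or misses the closure of `A`. -/
lemma split_lemma {U A s : Set S} (hUo : IsOpen U) (hA : IsOpen A)
    (hs : IsPreconnected s) (hsU : s ⊆ U) (hd : s ∩ frIn U A = ∅) :
    s ⊆ A ∨ s ⊆ U \ closure A := by
  have hsub : s ⊆ A ∪ (U \ closure A) := by
    intro x hx
    by_cases hc : x ∈ closure A
    · left
      by_contra hxA
      exact (Set.eq_empty_iff_forall_notMem.1 hd x) ⟨hx, ⟨hc, hsU hx⟩, hxA⟩
    · exact Or.inr ⟨hsU hx, hc⟩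
  have hdisj : Disjoint A (U \ closure A) :=
    Set.disjoint_left.2 fun x hxA hxd => hxd.2 (subset_closure hxA)
  rcases (s ∩ A).eq_empty_or_nonempty with hE | hN
  · right
    intro x hx
    rcases hsub hx with h | h
    · exact absurd (Set.eq_empty_iff_forall_notMem.1 hE x ⟨hx, h⟩) (fun h => h)
    · exact h
  · exact Or.inl (hs.subset_left_of_subset_union hA (hUo.sdiff isClosed_closure) hdisj hsub hN)

/-- Measure-theoretic impossibility of strict relative containment. -/
lemma no_containment {S : Type*} [TopologicalSpace S] [MeasurableSpace S] [BorelSpace S]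
    (μ : Measure S) [IsFiniteMeasure μ]
    (hpos : ∀ O : Set S, IsOpen O → O.Nonempty → 0 < μ O)
    {U A B : Set S} (hA : IsOpen A) (hB : IsOpen B)
    (hμ : μ A = μ B) (hBA : B ⊆ A) (hclBA : closure B ∩ U ⊆ A)
    (hFA : (frIn U A).Nonempty) : False := by
  have h1 : μ (A \ B) = 0 := by
    rw [measure_diff hBA hB.measurableSet.nullMeasurableSet (measure_ne_top μ B), hμ, tsub_self]
  have h2 : A \ closure B = ∅ := by
    by_contra hne
    have hp : 0 < μ (A \ closure B) :=
      hpos _ (hA.sdiff isClosed_closure) (Set.nonempty_iff_ne_empty.2 hne)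
    have hle : μ (A \ closure B) ≤ μ (A \ B) :=
      measure_mono (Set.diff_subset_diff_right subset_closure)
    rw [h1] at hle
    exact absurd (le_antisymm hle zero_le) (ne_of_gt hp)
  have hAcl : A ⊆ closure B := Set.diff_eq_empty.mp h2
  obtain ⟨x, hx⟩ := hFA
  have hx1 : x ∈ closure A := hx.1.1
  have hx2 : x ∈ U := hx.1.2
  have hxB : x ∈ closure B := closure_minimal hAcl isClosed_closure hx1
  exact hx.2 (hclBA ⟨hxB, hx2⟩)

/-- Lemma 3: for a fixed prime end represented by the chain `(Vᵢ)` with frontiers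
converging to the principal point `p`, setting `i₀ = inf { i : f(Vᵢ) ⊆ V₀ }`,
we have `fr_U(Vᵢ) ∩ fr_U(f(Vᵢ)) ≠ ∅` for all `i ≥ i₀`. -/
theorem frontier_meets_image_frontier
    [CompactSpace S] [ConnectedSpace S] [T2Space S]
    [MeasurableSpace S] [BorelSpace S]
    (μ : Measure S) [IsFiniteMeasure μ]
    (hpos : ∀ O : Set S, IsOpen O → O.Nonempty → 0 < μ O)
    (f : S ≃ₜ S) (hf : MeasurePreserving f μ μ)
    (U : Set S) (hUo : IsOpen U) (hUc : IsConnected U) (hUinv : f '' U = U)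
    (V : ℕ → Set S) (hV : IsPEChain U V)
    (hfixed : ChainEquiv (fun i => f '' V i) V)
    (p : S) (hp : FrTendsTo U V p) :
    ∀ i : ℕ, sInf {j : ℕ | f '' V j ⊆ V 0} ≤ i →
      (frIn U (V i) ∩ frIn U (f '' V i)).Nonempty := by
  obtain ⟨hVo, hVc, hVU, hVdec, hVfr, _⟩ := hV
  have hanti : Antitone V := antitone_nat_of_succ_le hVdec
  intro i hi
  by_contra hcon
  rw [Set.not_nonempty_iff_eq_empty] at hcon
  -- notation
  set A : Set S := V i with hA_def
  set B : Set S := f '' V i with hB_def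
  have hFB_eq : frIn U B = f '' frIn U A := frIn_image f U A hUinv
  have hAopen : IsOpen A := hVo i
  have hBopen : IsOpen B := f.isOpenMap _ hAopen
  have hAU : A ⊆ U := hVU i
  have hBU : B ⊆ U := by
    rw [hB_def, ← hUinv]; exact Set.image_mono hAU
  have hFA_ne : (frIn U A).Nonempty := (hVfr i).1
  have hFA_pc : IsPreconnected (frIn U A) := (hVfr i).2
  have hFB_ne : (frIn U B).Nonempty := by
    rw [hFB_eq]; exact hFA_ne.image _
  have hFB_pc : IsPreconnected (frIn U B) := by
    rw [hFB_eq]; exact hFA_pc.image _ f.continuous.continuousOn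
  have hFAU : frIn U A ⊆ U := fun x hx => hx.1.2
  have hFBU : frIn U B ⊆ U := fun x hx => hx.1.2
  -- f(Vᵢ) ⊆ V₀
  have hne0 : {j : ℕ | f '' V j ⊆ V 0}.Nonempty := hfixed.1 0
  have hmem : f '' V (sInf {j : ℕ | f '' V j ⊆ V 0}) ⊆ V 0 := Nat.sInf_mem hne0
  have hBV0 : B ⊆ V 0 := (Set.image_mono (hanti hi)).trans hmem
  have hAV0 : A ⊆ V 0 := hanti (Nat.zero_le i)
  -- A ∩ B is nonempty
  have hBpc : IsPreconnected B :=
    ((hVc i).image f f.continuous.continuousOn).isPreconnected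
  have hABne : (A ∩ B).Nonempty := by
    obtain ⟨j, hj⟩ := hfixed.2 i
    obtain ⟨x, hx⟩ := (hVc (max i j)).nonempty
    exact ⟨x, hanti (le_max_left i j) hx, hj (hanti (le_max_right i j) hx)⟩
  -- measures agree
  have hμAB : μ A = μ B := by
    have := hf.measure_preimage hBopen.measurableSet.nullMeasurableSet
    rwa [hB_def, Set.preimage_image_eq _ f.injective] at this
  -- the two dichotomies
  have hdAB : frIn U B ∩ frIn U A = ∅ := by
    rw [Set.inter_comm]; exact hcon
  have dichA : frIn U B ⊆ A ∨ frIn U B ⊆ U \ closure A :=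
    split_lemma hUo hAopen hFB_pc hFBU hdAB
  have dichB : frIn U A ⊆ B ∨ frIn U A ⊆ U \ closure B :=
    split_lemma hUo hBopen hFA_pc hFAU hcon
  rcases dichA with hFBA | hFBout
  · rcases dichB with hFAB | hFAout
    · -- crossing case: U = A ∪ B ⊆ V 0, contradicting nonempty frontier of V 0
      have hclW : closure (A ∪ B) ∩ U ⊆ A ∪ B := by
        intro x hx
        rw [closure_union] at hx
        rcases hx.1 with h | h
        · by_cases hxA : x ∈ A
          · exact Or.inl hxA
          · exact Or.inr (hFAB ⟨⟨h, hx.2⟩, hxA⟩)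
        · by_cases hxB : x ∈ B
          · exact Or.inr hxB
          · exact Or.inl (hFBA ⟨⟨h, hx.2⟩, hxB⟩)
      have hUsub : U ⊆ (A ∪ B) ∪ (U \ closure (A ∪ B)) := by
        intro x hx
        by_cases hc : x ∈ closure (A ∪ B)
        · exact Or.inl (hclW ⟨hc, hx⟩)
        · exact Or.inr ⟨hx, hc⟩
      have hdisj : Disjoint (A ∪ B) (U \ closure (A ∪ B)) :=
        Set.disjoint_left.2 fun x hxW hxd => hxd.2 (subset_closure hxW)
      have hUAB : U ⊆ A ∪ B := by
        refine hUc.isPreconnected.subset_left_of_subset_union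
          (hAopen.union hBopen) (hUo.sdiff isClosed_closure) hdisj hUsub ?_
        obtain ⟨x, hx⟩ := hABne
        exact ⟨x, hAU hx.1, Or.inl hx.1⟩
      have hUV0 : U ⊆ V 0 := hUAB.trans (Set.union_subset hAV0 hBV0)
      obtain ⟨x, hx⟩ := (hVfr 0).1
      exact hx.2 (hUV0 hx.1.2)
    · -- F_B ⊆ A and F_A misses closure B : closure B ∩ U ⊆ A
      have hBFA : B ∩ frIn U A = ∅ := by
        apply Set.eq_empty_iff_forall_notMem.2
        intro x hx
        exact (hFAout hx.2).2 (subset_closure hx.1)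
      have hBA : B ⊆ A := by
        rcases split_lemma hUo hAopen hBpc hBU hBFA with h | h
        · exact h
        · obtain ⟨x, hx⟩ := hABne
          exact absurd (subset_closure hx.1) (h hx.2).2
      have hclBA : closure B ∩ U ⊆ A := by
        intro x hx
        by_cases hxB : x ∈ B
        · exact hBA hxB
        · exact hFBA ⟨hx, hxB⟩
      exact no_containment μ hpos hAopen hBopen hμAB hBA hclBA hFA_ne
  · rcases dichB with hFAB | hFAout
    · -- F_A ⊆ B and F_B misses closure A : closure A ∩ U ⊆ B
      have hAFB : A ∩ frIn U B = ∅ := by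
        apply Set.eq_empty_iff_forall_notMem.2
        intro x hx
        exact (hFBout hx.2).2 (subset_closure hx.1)
      have hAB : A ⊆ B := by
        rcases split_lemma hUo hBopen ((hVc i).isPreconnected) hAU hAFB with h | h
        · exact h
        · obtain ⟨x, hx⟩ := hABne
          exact absurd (subset_closure hx.2) (h hx.1).2
      have hclAB : closure A ∩ U ⊆ B := by
        intro x hx
        by_cases hxA : x ∈ A
        · exact hAB hxA
        · exact hFAB ⟨hx, hxA⟩
      exact no_containment μ hpos hBopen hAopen hμAB.symm hAB hclAB hFB_ne
    · -- both frontiers outside : A = B, so the frontiers coincide, contradiction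
      have hBFA : B ∩ frIn U A = ∅ := by
        apply Set.eq_empty_iff_forall_notMem.2
        intro x hx
        exact (hFAout hx.2).2 (subset_closure hx.1)
      have hBA : B ⊆ A := by
        rcases split_lemma hUo hAopen hBpc hBU hBFA with h | h
        · exact h
        · obtain ⟨x, hx⟩ := hABne
          exact absurd (subset_closure hx.1) (h hx.2).2
      have hAFB : A ∩ frIn U B = ∅ := by
        apply Set.eq_empty_iff_forall_notMem.2
        intro x hx
        exact (hFBout hx.2).2 (subset_closure hx.1)
      have hAB : A ⊆ B := by
        rcases split_lemma hUo hBopen ((hVc i).isPreconnected) hAU hAFB with h | h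
        · exact h
        · obtain ⟨x, hx⟩ := hABne
          exact absurd (subset_closure hx.2) (h hx.1).2
      have : A = B := le_antisymm hAB hBA
      obtain ⟨x, hx⟩ := hFA_ne
      exact (Set.eq_empty_iff_forall_notMem.1 hcon x) ⟨hx, this ▸ hx⟩
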